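/- Let n ≥ 1 be an integer and let q be a real number with q > 0 and q ≠ 1. Set z₋ := 1/(1+√q)² and z₊ := 1/(1−√q)². Then (1/(π·|q−1|)) · ∫_{z₋}^{z₊} z^{−n} · ((z − z₋)(z₊ − z))^{−1/2} dz = ∑_{j=0}^{n−1} C(n−1, j)²·q^j, where C(n,r) denotes the binomial coefficient. -/

import Mathlib

set_option maxHeartbeats 1000000
open Real MeasureTheory intervalIntegral Finset Set

lemma expIntZero (l : ℤ) (hl : l ≠ 0) :
    (∫ φ : ℝ in (-π)..π, Complex.exp ((l : ℂ) * Complex.I * φ)) = 0 := by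
  have hc : (l : ℂ) * Complex.I ≠ 0 :=
    mul_ne_zero (Int.cast_ne_zero.mpr hl) Complex.I_ne_zero
  rw [integral_exp_mul_complex hc]
  have h1 : ∀ k : ℤ, Complex.exp ((k : ℂ) * Complex.I * (π : ℝ)) = (-1 : ℂ) ^ k := by
    intro k
    rw [show ((k : ℂ) * Complex.I * (π : ℝ)) = (k : ℂ) * ((π:ℝ) * Complex.I) by ring,
      Complex.exp_int_mul, Complex.exp_pi_mul_I]
  have h2 : ((l : ℂ) * Complex.I * ((-π : ℝ) : ℂ)) = ((-l : ℤ) : ℂ) * Complex.I * (π : ℝ) := by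
    push_cast; ring
  rw [h2, h1, h1]
  have : ((-1 : ℂ)) ^ (-l) = (-1 : ℂ) ^ l := by
    rw [zpow_neg]
    refine inv_eq_of_mul_eq_one_left ?_
    rw [← zpow_add₀ (by norm_num : (-1:ℂ) ≠ 0)]
    rw [show l + l = 2 * l by ring, zpow_mul]
    norm_num
  rw [this, sub_self, zero_div]

lemma hfact (m : ℕ) (s φ : ℝ) : (((1 + s ^ 2 + 2 * s * Real.cos φ) ^ m : ℝ) : ℂ)
    = (1 + s * Complex.exp (Complex.I * φ)) ^ m
      * (1 + s * Complex.exp (-(Complex.I * φ))) ^ m := by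
  rw [← mul_pow]
  push_cast
  congr 1
  have hc : Complex.cos (φ : ℂ) = (Complex.exp (Complex.I * φ)
      + Complex.exp (-(Complex.I * φ))) / 2 := by
    rw [Complex.cos]; ring_nf
  have he : Complex.exp (Complex.I * φ) * Complex.exp (-(Complex.I * φ)) = 1 := by
    rw [← Complex.exp_add]; simp
  rw [hc]
  linear_combination -(s : ℂ) ^ 2 * he

lemma binom_exp (m : ℕ) (a z : ℂ) : (1 + a * Complex.exp z) ^ m
    = ∑ j ∈ range (m + 1), a ^ j * (Nat.choose m j : ℂ) * Complex.exp ((j : ℕ) * z) := by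
  rw [add_comm, add_pow]
  refine Finset.sum_congr rfl fun j hj => ?_
  rw [mul_pow, one_pow, ← Complex.exp_nat_mul]
  ring

lemma trigIntegral (m : ℕ) (s : ℝ) :
    (∫ φ in (-π)..π, (1 + s ^ 2 + 2 * s * Real.cos φ) ^ m)
      = (2 * π) * ∑ j ∈ range (m + 1), (Nat.choose m j : ℝ) ^ 2 * s ^ (2 * j) := by
  have expand : ∀ φ : ℝ, (((1 + s ^ 2 + 2 * s * Real.cos φ) ^ m : ℝ) : ℂ)
      = ∑ j ∈ range (m + 1), ∑ k ∈ range (m + 1),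
          ((s : ℂ) ^ j * (Nat.choose m j : ℂ) * (s : ℂ) ^ k * (Nat.choose m k : ℂ))
            * Complex.exp ((((j : ℤ) - (k : ℤ) : ℤ) : ℂ) * Complex.I * φ) := by
    intro φ
    rw [hfact, binom_exp, binom_exp, Finset.sum_mul_sum]
    refine Finset.sum_congr rfl fun j _ => Finset.sum_congr rfl fun k _ => ?_
    have h2 : Complex.exp ((j : ℕ) * (Complex.I * (φ:ℂ)))
        * Complex.exp ((k : ℕ) * (-(Complex.I * (φ:ℂ))))
        = Complex.exp ((((j : ℤ) - (k : ℤ) : ℤ) : ℂ) * Complex.I * φ) := by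
      rw [← Complex.exp_add]
      congr 1
      push_cast
      ring
    linear_combination ((s : ℂ) ^ j * (Nat.choose m j : ℂ) * (s : ℂ) ^ k
      * (Nat.choose m k : ℂ)) * h2
  have Hjk : ∀ j k : ℕ, IntervalIntegrable (fun φ : ℝ =>
      ((s : ℂ) ^ j * (Nat.choose m j : ℂ) * (s : ℂ) ^ k * (Nat.choose m k : ℂ))
        * Complex.exp ((((j : ℤ) - (k : ℤ) : ℤ) : ℂ) * Complex.I * φ))
      volume (-π) π := by
    intro j k
    apply Continuous.intervalIntegrable
    exact continuous_const.mul
      (Complex.continuous_exp.comp (continuous_const.mul Complex.continuous_ofReal))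
  have Hj : ∀ j : ℕ, IntervalIntegrable (fun φ : ℝ => ∑ k ∈ range (m + 1),
      ((s : ℂ) ^ j * (Nat.choose m j : ℂ) * (s : ℂ) ^ k * (Nat.choose m k : ℂ))
        * Complex.exp ((((j : ℤ) - (k : ℤ) : ℤ) : ℂ) * Complex.I * φ))
      volume (-π) π := by
    intro j
    apply Continuous.intervalIntegrable
    exact continuous_finset_sum _ (fun k _ => continuous_const.mul
      (Complex.continuous_exp.comp (continuous_const.mul Complex.continuous_ofReal)))
  have key : (∫ φ in (-π)..π, (((1 + s ^ 2 + 2 * s * Real.cos φ) ^ m : ℝ) : ℂ))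
      = (((2 * π) * ∑ j ∈ range (m + 1), (Nat.choose m j : ℝ) ^ 2 * s ^ (2 * j) : ℝ) : ℂ) := by
    calc (∫ φ in (-π)..π, (((1 + s ^ 2 + 2 * s * Real.cos φ) ^ m : ℝ) : ℂ))
        = ∫ φ in (-π)..π, ∑ j ∈ range (m + 1), ∑ k ∈ range (m + 1),
            ((s : ℂ) ^ j * (Nat.choose m j : ℂ) * (s : ℂ) ^ k * (Nat.choose m k : ℂ))
              * Complex.exp ((((j : ℤ) - (k : ℤ) : ℤ) : ℂ) * Complex.I * φ) :=
          intervalIntegral.integral_congr (fun φ _ => expand φ)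
      _ = ∑ j ∈ range (m + 1), ∫ φ in (-π)..π, ∑ k ∈ range (m + 1),
            ((s : ℂ) ^ j * (Nat.choose m j : ℂ) * (s : ℂ) ^ k * (Nat.choose m k : ℂ))
              * Complex.exp ((((j : ℤ) - (k : ℤ) : ℤ) : ℂ) * Complex.I * φ) :=
          intervalIntegral.integral_finset_sum (fun j _ => Hj j)
      _ = ∑ j ∈ range (m + 1), ∑ k ∈ range (m + 1), ∫ φ in (-π)..π,
            ((s : ℂ) ^ j * (Nat.choose m j : ℂ) * (s : ℂ) ^ k * (Nat.choose m k : ℂ))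
              * Complex.exp ((((j : ℤ) - (k : ℤ) : ℤ) : ℂ) * Complex.I * φ) :=
          Finset.sum_congr rfl (fun j _ =>
            intervalIntegral.integral_finset_sum (fun k _ => Hjk j k))
      _ = ∑ j ∈ range (m + 1), ∑ k ∈ range (m + 1),
            (if k = j then ((2 * π : ℝ) : ℂ) * ((Nat.choose m j : ℂ) ^ 2 * (s : ℂ) ^ (2 * j))
             else 0) := by
          refine Finset.sum_congr rfl fun j _ => Finset.sum_congr rfl fun k _ => ?_
          rw [intervalIntegral.integral_const_mul]
          by_cases hkj : k = j
          · subst hkj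
            simp only [sub_self, Int.cast_zero, zero_mul, Complex.exp_zero, if_true]
            rw [intervalIntegral.integral_const, Complex.real_smul]
            push_cast
            ring
          · rw [expIntZero _ (sub_ne_zero.mpr (fun h => hkj (by exact_mod_cast h.symm))),
              mul_zero, if_neg hkj]
      _ = ∑ j ∈ range (m + 1),
            ((2 * π : ℝ) : ℂ) * ((Nat.choose m j : ℂ) ^ 2 * (s : ℂ) ^ (2 * j)) := by
          refine Finset.sum_congr rfl fun j hj => ?_
          rw [Finset.sum_ite_eq' (range (m + 1)) j
            (fun _ => ((2 * π : ℝ) : ℂ) * ((Nat.choose m j : ℂ) ^ 2 * (s : ℂ) ^ (2 * j))),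
            if_pos hj]
      _ = (((2 * π) * ∑ j ∈ range (m + 1), (Nat.choose m j : ℝ) ^ 2 * s ^ (2 * j) : ℝ) : ℂ) := by
          push_cast
          rw [Finset.mul_sum]
  rw [intervalIntegral.integral_ofReal] at key
  exact_mod_cast key

lemma rpow_neg_half_sq (x : ℝ) (hx : 0 < x) : (x ^ 2 : ℝ) ^ (-(1:ℝ)/2) = x⁻¹ := by
  rw [← Real.rpow_natCast x 2, ← Real.rpow_mul hx.le]
  norm_num
  exact Real.rpow_neg_one x

lemma subIntegral (m : ℕ) (q : ℝ) (hq : 0 < q) (hq1 : q ≠ 1) :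
    (∫ z in (1 / (1 + Real.sqrt q) ^ 2)..(1 / (1 - Real.sqrt q) ^ 2),
        z ^ (-((m+1 : ℕ) : ℤ)) *
          ((z - 1 / (1 + Real.sqrt q) ^ 2) * (1 / (1 - Real.sqrt q) ^ 2 - z)) ^ (-(1 : ℝ) / 2))
      = |q - 1| * ∫ θ in (-(π/2))..(π/2), (1 + q + 2 * Real.sqrt q * Real.sin θ) ^ m := by
  set s := Real.sqrt q with hs
  have hs0 : 0 < s := Real.sqrt_pos.mpr hq
  have hs2 : s ^ 2 = q := Real.sq_sqrt hq.le
  have hs1 : s ≠ 1 := by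
    intro h; apply hq1; rw [← hs2, h]; norm_num
  have h1s : (1 : ℝ) - s ≠ 0 := sub_ne_zero.mpr (Ne.symm hs1)
  have hA : (0:ℝ) < (1 + s) ^ 2 := by positivity
  have hB : (0:ℝ) < (1 - s) ^ 2 := pow_two_pos_of_ne_zero h1s
  have hBA : (1 - s) ^ 2 < (1 + s) ^ 2 := by nlinarith
  have habs0 : 0 < |q - 1| := abs_pos.mpr (sub_ne_zero.mpr hq1)
  set w : ℝ → ℝ := fun θ => 1 + q + 2 * s * Real.sin θ with hw
  have hwpos : ∀ θ, 0 < w θ := by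
    intro θ
    have h1 : 0 ≤ 2 * s * (Real.sin θ + 1) :=
      mul_nonneg (by positivity) (by linarith [Real.neg_one_le_sin θ])
    have : w θ = 1 + q + 2 * s * Real.sin θ := rfl
    nlinarith [hB, hs2]
  set g : ℝ → ℝ := fun z => z ^ (-((m+1 : ℕ) : ℤ)) *
      ((z - 1 / (1 + s) ^ 2) * (1 / (1 - s) ^ 2 - z)) ^ (-(1 : ℝ) / 2) with hg
  set f : ℝ → ℝ := fun θ => (w θ)⁻¹ with hf
  have hderiv : ∀ θ ∈ Ioo (-(π/2)) (π/2),
      HasDerivWithinAt f (-(2 * s * Real.cos θ) / (w θ) ^ 2) (Ioo (-(π/2)) (π/2)) θ := by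
    intro θ _
    have h1 : HasDerivAt w (2 * s * Real.cos θ) θ := by
      simpa [hw] using ((Real.hasDerivAt_sin θ).const_mul (2 * s)).const_add (1 + q)
    exact (h1.inv (hwpos θ).ne').hasDerivWithinAt
  have hinj : InjOn f (Ioo (-(π/2)) (π/2)) := by
    intro a ha b hb hab
    have hwab : w a = w b := by
      have := congrArg (·⁻¹) hab
      simpa [hf, inv_inv] using this
    have hsin : Real.sin a = Real.sin b := by
      simp only [hw] at hwab
      have h2 : 2 * s * Real.sin a = 2 * s * Real.sin b := by linarith
      exact mul_left_cancel₀ (by positivity : (2:ℝ) * s ≠ 0) h2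
    exact Real.injOn_sin ⟨ha.1.le, ha.2.le⟩ ⟨hb.1.le, hb.2.le⟩ hsin
  have hwB : ∀ θ ∈ Ioo (-(π/2)) (π/2), (1 - s) ^ 2 < w θ := by
    intro θ hθ
    have hsm1 : -1 < Real.sin θ := by
      have h := Real.strictMonoOn_sin (Set.mem_Icc.mpr ⟨le_rfl, by linarith [Real.pi_pos]⟩)
        ⟨hθ.1.le, hθ.2.le⟩ hθ.1
      rwa [Real.sin_neg, Real.sin_pi_div_two] at h
    have : w θ = 1 + q + 2 * s * Real.sin θ := rfl
    nlinarith [mul_pos hs0 (by linarith : (0:ℝ) < 1 + Real.sin θ), hs2]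
  have hwA : ∀ θ ∈ Ioo (-(π/2)) (π/2), w θ < (1 + s) ^ 2 := by
    intro θ hθ
    have hs1' : Real.sin θ < 1 := by
      have h := Real.strictMonoOn_sin ⟨hθ.1.le, hθ.2.le⟩
        (Set.mem_Icc.mpr ⟨by linarith [Real.pi_pos], le_rfl⟩) hθ.2
      rwa [Real.sin_pi_div_two] at h
    have : w θ = 1 + q + 2 * s * Real.sin θ := rfl
    nlinarith [mul_pos hs0 (by linarith : (0:ℝ) < 1 - Real.sin θ), hs2]
  have himg : f '' Set.Ioo (-(π/2)) (π/2) = Set.Ioo (1 / (1 + s) ^ 2) (1 / (1 - s) ^ 2) := by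
    ext z
    simp only [Set.mem_image, Set.mem_Ioo]
    constructor
    · rintro ⟨θ, hθ, rfl⟩
      constructor
      · rw [show f θ = 1 / w θ by simp [hf, one_div]]
        exact one_div_lt_one_div_of_lt (hwpos θ) (hwA θ hθ)
      · rw [show f θ = 1 / w θ by simp [hf, one_div]]
        exact one_div_lt_one_div_of_lt hB (hwB θ hθ)
    · intro hz
      have hz0 : 0 < z := lt_trans (by positivity) hz.1
      have hzB : (1 - s) ^ 2 < z⁻¹ := by
        have := one_div_lt_one_div_of_lt hz0 hz.2
        rwa [one_div_one_div, one_div] at this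
      have hzA : z⁻¹ < (1 + s) ^ 2 := by
        have := one_div_lt_one_div_of_lt (by positivity) hz.1
        rwa [one_div_one_div, one_div] at this
      set t := (z⁻¹ - (1 + q)) / (2 * s) with ht
      have ht1 : -1 < t := by
        rw [ht, lt_div_iff₀ (by positivity)]
        nlinarith [hzB, hs2]
      have ht2 : t < 1 := by
        rw [ht, div_lt_one (by positivity)]
        nlinarith [hzA, hs2]
      refine ⟨Real.arcsin t, ⟨Real.neg_pi_div_two_lt_arcsin.mpr ht1,
        Real.arcsin_lt_pi_div_two.mpr ht2⟩, ?_⟩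
      have hsin : Real.sin (Real.arcsin t) = t := Real.sin_arcsin ht1.le ht2.le
      have : w (Real.arcsin t) = z⁻¹ := by
        simp only [hw, hsin]
        field_simp [ht]
        have h2t : t * (2 * s) = z⁻¹ - (1 + q) := by
          rw [ht, div_mul_cancel₀ _ (by positivity : (2:ℝ) * s ≠ 0)]
        linear_combination z * h2t + inv_mul_cancel₀ hz0.ne'
      rw [hf]
      simp only [this, inv_inv]
  have hle : 1 / (1 + s) ^ 2 ≤ 1 / (1 - s) ^ 2 := (one_div_lt_one_div_of_lt hB hBA).le
  have cov := MeasureTheory.integral_image_eq_integral_abs_deriv_smul measurableSet_Ioo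
    hderiv hinj g
  rw [himg] at cov
  have hptw : Set.EqOn (fun θ => |(-(2 * s * Real.cos θ) / (w θ) ^ 2)| • g (f θ))
      (fun θ => |q - 1| * (w θ) ^ m) (Set.Ioo (-(π/2)) (π/2)) := by
    intro θ hθ
    have hcos : 0 < Real.cos θ := Real.cos_pos_of_mem_Ioo hθ
    have hW := hwpos θ
    have hc : 0 < 2 * s * Real.cos θ := by positivity
    have hcos2 : Real.cos θ ^ 2 = 1 - Real.sin θ ^ 2 := by
      nlinarith [Real.sin_sq_add_cos_sq θ]
    have hP : (f θ - 1 / (1 + s) ^ 2) * (1 / (1 - s) ^ 2 - f θ)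
        = ((2 * s * Real.cos θ) / (w θ * |q - 1|)) ^ 2 := by
      have hW := (hwpos θ).ne'
      have e1 : f θ - 1 / (1 + s) ^ 2 = ((1 + s) ^ 2 - w θ) / (w θ * (1 + s) ^ 2) := by
        rw [hf]; field_simp
      have e2 : 1 / (1 - s) ^ 2 - f θ = (w θ - (1 - s) ^ 2) / ((1 - s) ^ 2 * w θ) := by
        rw [hf]; field_simp
      have e3 : ((1 + s) ^ 2 - w θ) * (w θ - (1 - s) ^ 2) = (2 * s * Real.cos θ) ^ 2 := by
        rw [mul_pow (2 * s) (Real.cos θ) 2, hcos2]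
        simp only [hw, ← hs2]
        ring
      have hAB : (1 + s) ^ 2 * (1 - s) ^ 2 = (q - 1) ^ 2 := by rw [← hs2]; ring
      have e4 : (w θ * (1 + s) ^ 2) * ((1 - s) ^ 2 * w θ) = (w θ * |q - 1|) ^ 2 := by
        rw [mul_pow, sq_abs]
        linear_combination (w θ) ^ 2 * hAB
      rw [e1, e2, div_mul_div_comm, e3, e4, div_pow]
    have h1 : ((w θ)⁻¹) ^ (-((m + 1 : ℕ) : ℤ)) = (w θ) ^ (m + 1) := by
      rw [zpow_neg, inv_zpow, inv_inv, zpow_natCast]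
    have hgf : g (f θ) = (w θ) ^ (m + 1) * (w θ * |q - 1| / (2 * s * Real.cos θ)) := by
      simp only [hg, hf] at hP ⊢
      rw [h1, hP, rpow_neg_half_sq _ (by positivity), inv_div]
    simp only [hgf, smul_eq_mul, abs_div, abs_neg, abs_of_pos hc, abs_of_pos (pow_pos hW 2)]
    field_simp
    ring
  rw [intervalIntegral.integral_of_le hle, MeasureTheory.integral_Ioc_eq_integral_Ioo]
  show (∫ z in Set.Ioo (1 / (1 + s) ^ 2) (1 / (1 - s) ^ 2), g z) = _
  rw [cov, MeasureTheory.setIntegral_congr_fun measurableSet_Ioo hptw,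
    MeasureTheory.integral_const_mul,
    intervalIntegral.integral_of_le (by linarith [Real.pi_pos] : -(π/2) ≤ π/2),
    MeasureTheory.integral_Ioc_eq_integral_Ioo]

lemma halfTrig (m : ℕ) (a c : ℝ) :
    (∫ θ in (-(π/2))..(π/2), (a + c * Real.sin θ) ^ m)
      = (1/2) * ∫ φ in (-π)..π, (a + c * Real.cos φ) ^ m := by
  have hcont : Continuous fun φ : ℝ => (a + c * Real.cos φ) ^ m :=
    (continuous_const.add (continuous_const.mul Real.continuous_cos)).pow m
  have h1 : (∫ θ in (-(π/2))..(π/2), (a + c * Real.sin θ) ^ m)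
      = ∫ φ in (-π)..(0:ℝ), (a + c * Real.cos φ) ^ m := by
    have := intervalIntegral.integral_comp_sub_right
      (a := -(π/2)) (b := π/2) (fun φ => (a + c * Real.cos φ) ^ m) (π/2)
    rw [show -(π/2) - π/2 = -π by ring, show π/2 - π/2 = (0:ℝ) by ring] at this
    rw [← this]
    congr 1
    funext θ
    rw [Real.cos_sub_pi_div_two]
  have h2 : (∫ φ in (-π)..(0:ℝ), (a + c * Real.cos φ) ^ m)
      = ∫ φ in (0:ℝ)..π, (a + c * Real.cos φ) ^ m := by
    have := intervalIntegral.integral_comp_neg (a := (0:ℝ)) (b := π)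
      (fun φ => (a + c * Real.cos φ) ^ m)
    rw [neg_zero] at this
    rw [← this]
    congr 1
    funext θ
    rw [Real.cos_neg]
  have h3 : (∫ φ in (-π)..π, (a + c * Real.cos φ) ^ m)
      = (∫ φ in (-π)..(0:ℝ), (a + c * Real.cos φ) ^ m)
        + ∫ φ in (0:ℝ)..π, (a + c * Real.cos φ) ^ m :=
    (intervalIntegral.integral_add_adjacent_intervals
      (hcont.intervalIntegrable _ _) (hcont.intervalIntegrable _ _)).symm
  rw [h1, h3, ← h2]
  ring


/-- Branch-cut integral for the functions `D_n(q)` -/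
theorem stmt12 (n : ℕ) (hn : 1 ≤ n) (q : ℝ) (hq : 0 < q) (hq1 : q ≠ 1) :
    (1 / (Real.pi * |q - 1|)) *
      ∫ z in (1 / (1 + Real.sqrt q) ^ 2)..(1 / (1 - Real.sqrt q) ^ 2),
        z ^ (-(n : ℤ)) *
          ((z - 1 / (1 + Real.sqrt q) ^ 2) * (1 / (1 - Real.sqrt q) ^ 2 - z)) ^ (-(1 : ℝ) / 2)
      = ∑ j ∈ Finset.range n, (Nat.choose (n - 1) j : ℝ) ^ 2 * q ^ j := by
  obtain ⟨m, rfl⟩ : ∃ m, n = m + 1 := ⟨n - 1, (Nat.succ_pred_eq_of_pos hn).symm⟩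
  have hs2 : Real.sqrt q ^ 2 = q := Real.sq_sqrt hq.le
  rw [subIntegral m q hq hq1, halfTrig m (1 + q) (2 * Real.sqrt q),
    show (1 + q : ℝ) = 1 + Real.sqrt q ^ 2 from by rw [hs2],
    trigIntegral m (Real.sqrt q)]
  have hpow : ∀ j : ℕ, Real.sqrt q ^ (2 * j) = q ^ j := fun j => by rw [pow_mul, hs2]
  simp_rw [hpow, Nat.add_sub_cancel]
  have hne : |q - 1| ≠ 0 := abs_ne_zero.mpr (sub_ne_zero.mpr hq1)
  field_simp [Real.pi_ne_zero]
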